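/- arXiv:1709.10444 — 4 statements merged into one kernel-verified Lean document; each statement's English description precedes it below -/
import Mathlib

section
/- For integers y_1 < y_2 < ... < y_n and x_1 < x_2 < ... < x_n, the interlacing condition y_1 ≤ x_1 < y_2 ≤ x_2 < ... < y_n ≤ x_n holds if and only if det(1_{y_i ≤ x_j})_{i,j=1}^n = 1, and otherwise this determinant equals 0. -/
/-- For strictly increasing integer sequences `y` and `x`, the interlacing condition
`y₁ ≤ x₁ < y₂ ≤ x₂ < ⋯ ≤ xₙ` holds iff `det(1_{yᵢ ≤ xⱼ}) = 1`, and otherwise the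
determinant equals 0. -/
theorem stmt0 (n : ℕ) (y x : Fin n → ℤ) (hy : StrictMono y) (hx : StrictMono x) :
    ((∀ i : Fin n, y i ≤ x i ∧ ∀ h : (i : ℕ) + 1 < n, x i < y ⟨(i : ℕ) + 1, h⟩) ↔
      Matrix.det (Matrix.of fun i j : Fin n => if y i ≤ x j then (1 : ℤ) else 0) = 1) ∧
    (¬ (∀ i : Fin n, y i ≤ x i ∧ ∀ h : (i : ℕ) + 1 < n, x i < y ⟨(i : ℕ) + 1, h⟩) →
      Matrix.det (Matrix.of fun i j : Fin n => if y i ≤ x j then (1 : ℤ) else 0) = 0) := by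
  set M : Matrix (Fin n) (Fin n) ℤ :=
    Matrix.of fun i j : Fin n => if y i ≤ x j then (1 : ℤ) else 0 with hM
  have lemA : (∀ i : Fin n, y i ≤ x i ∧ ∀ h : (i : ℕ) + 1 < n, x i < y ⟨(i : ℕ) + 1, h⟩) →
      M.det = 1 := by
    intro hint
    have htri : M.BlockTriangular id := by
      intro i j hj
      have hj' : (j : ℕ) < (i : ℕ) := hj
      have h1 : (j : ℕ) + 1 < n := lt_of_le_of_lt (Nat.succ_le_of_lt hj') i.is_lt
      have hxy : x j < y i := by
        refine lt_of_lt_of_le ((hint j).2 h1) (hy.monotone ?_)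
        exact Fin.mk_le_of_le_val (Nat.succ_le_of_lt hj')
      simp only [hM, Matrix.of_apply, if_neg (not_le.2 hxy)]
    rw [Matrix.det_of_upperTriangular htri]
    refine Finset.prod_eq_one fun i _ => ?_
    simp only [hM, Matrix.of_apply, if_pos (hint i).1]
  have lemB : M.det ≠ 0 →
      (∀ i : Fin n, y i ≤ x i ∧ ∀ h : (i : ℕ) + 1 < n, x i < y ⟨(i : ℕ) + 1, h⟩) := by
    intro hdet
    set t : Fin n → ℕ := fun r => (Finset.univ.filter fun j : Fin n => x j < y r).card with ht
    have L1 : ∀ r j : Fin n, y r ≤ x j ↔ t r ≤ (j : ℕ) := by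
      intro r j
      constructor
      · intro h
        have hsub : (Finset.univ.filter fun j' : Fin n => x j' < y r) ⊆ Finset.Iio j := by
          intro j' hj'
          simp only [Finset.mem_filter] at hj'
          exact Finset.mem_Iio.2 (hx.lt_iff_lt.1 (lt_of_lt_of_le hj'.2 h))
        calc t r ≤ (Finset.Iio j).card := Finset.card_le_card hsub
          _ = (j : ℕ) := Fin.card_Iio j
      · intro h
        by_contra hle
        push_neg at hle
        have hsub : Finset.Iic j ⊆ (Finset.univ.filter fun j' : Fin n => x j' < y r) := by
          intro j' hj'
          simp only [Finset.mem_filter, Finset.mem_univ, true_and]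
          exact lt_of_le_of_lt (hx.monotone (Finset.mem_Iic.1 hj')) hle
        have : (j : ℕ) + 1 ≤ t r := by
          calc (j : ℕ) + 1 = (Finset.Iic j).card := (Fin.card_Iic j).symm
            _ ≤ t r := Finset.card_le_card hsub
        omega
    have htlt : ∀ r : Fin n, t r < n := by
      intro r
      by_contra hge
      push_neg at hge
      refine hdet (Matrix.det_eq_zero_of_row_eq_zero r fun j => ?_)
      have : ¬ y r ≤ x j := fun h => by
        have := (L1 r j).1 h; omega
      simp only [hM, Matrix.of_apply, if_neg this]
    set t' : Fin n → Fin n := fun r => ⟨t r, htlt r⟩ with ht'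
    have hmono : Monotone t' := by
      intro a b hab
      refine Fin.mk_le_mk.2 (Finset.card_le_card fun j hj => ?_)
      simp only [Finset.mem_filter, Finset.mem_univ, true_and] at hj ⊢
      exact lt_of_lt_of_le hj (hy.monotone hab)
    have hinj : Function.Injective t' := by
      intro a b hab
      by_contra hne
      refine hdet (Matrix.det_zero_of_row_eq hne ?_)
      funext j
      have hta : t a = t b := congrArg Fin.val hab
      simp only [hM, Matrix.of_apply, L1 a j, L1 b j, hta]
    have hsm : StrictMono t' := hmono.strictMono_of_injective hinj
    have hbij : Function.Bijective t' := (Finite.injective_iff_bijective).1 hinj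
    haveI : WellFoundedLT (Fin n) := Finite.to_wellFoundedLT
    have hid : t' = id := by
      exact (StrictMono.range_inj (β := Fin n) (γ := Fin n) hsm strictMono_id).1
        (by rw [Set.range_id, Set.range_eq_univ.2 hbij.2])
    have htid : ∀ r : Fin n, t r = (r : ℕ) := fun r =>
      congrArg Fin.val (congrFun hid r)
    intro i
    refine ⟨(L1 i i).2 (le_of_eq (htid i)), fun h => ?_⟩
    by_contra hle
    push_neg at hle
    have := (L1 ⟨(i : ℕ) + 1, h⟩ i).1 hle
    rw [htid ⟨(i : ℕ) + 1, h⟩] at this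
    simp at this
  refine ⟨⟨lemA, fun h => lemB (by rw [h]; norm_num)⟩, fun h => ?_⟩
  by_contra hd
  exact h (lemB hd)
end

section
/- For the difference operator L acting on functions f: I → ℝ (I = ℕ or ℤ) by (Lf)(x) = (ax² + bx + c)(f(x+1) - f(x)) + (ax² + b̄x + c̄)(f(x-1) - f(x)), the Vandermonde function Δ_n(x) = ∏_{1≤i<j≤n}(x_j - x_i) satisfies ∑_{i=1}^n L_{x_i} Δ_n(x) = (a·n(n-1)(n-2)/3 + (b - b̄)·n(n-1)/2)·Δ_n(x) for all x with x_1 < x_2 < ... < x_n. -/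
open Finset Polynomial

/-- real Vandermonde -/
noncomputable def rvand {n : ℕ} (u : Fin n → ℝ) : ℝ :=
  ∏ i : Fin n, ∏ j ∈ Finset.Ioi i, (u j - u i)

lemma erase_univ_eq {n : ℕ} (i : Fin n) :
    (Finset.univ.erase i) = Finset.Iio i ∪ Finset.Ioi i := by
  ext j
  simp only [Finset.mem_erase, Finset.mem_union, Finset.mem_Iio, Finset.mem_Ioi,
    Finset.mem_univ, and_true]
  exact ne_iff_lt_or_gt

lemma prod_erase_split {n : ℕ} (i : Fin n) (f : Fin n → ℝ) :
    ∏ j ∈ Finset.univ.erase i, f j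
      = (∏ j ∈ Finset.Iio i, f j) * ∏ j ∈ Finset.Ioi i, f j := by
  rw [erase_univ_eq, Finset.prod_union]
  exact Finset.disjoint_left.2 fun j hj hj' => absurd (Finset.mem_Iio.1 hj)
    (not_lt.2 (le_of_lt (Finset.mem_Ioi.1 hj')))

/-- decomposition of the Vandermonde with the i-th coordinate replaced -/
lemma rvand_update {n : ℕ} (u : Fin n → ℝ) (i : Fin n) (y : ℝ) :
    rvand (Function.update u i y)
      = ((∏ k ∈ Finset.Iio i, (y - u k)) * ∏ j ∈ Finset.Ioi i, (u j - y))
        * ∏ k ∈ Finset.univ.erase i, ∏ j ∈ (Finset.Ioi k).erase i, (u j - u k) := by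
  classical
  set u' := Function.update u i y with hu'
  have hui : u' i = y := Function.update_self i y u
  have huj : ∀ j, j ≠ i → u' j = u j := fun j hj => Function.update_of_ne hj y u
  rw [rvand, ← Finset.mul_prod_erase Finset.univ _ (Finset.mem_univ i)]
  have h1 : ∏ j ∈ Finset.Ioi i, (u' j - u' i) = ∏ j ∈ Finset.Ioi i, (u j - y) := by
    refine Finset.prod_congr rfl fun j hj => ?_
    rw [hui, huj j (ne_of_gt (Finset.mem_Ioi.1 hj))]
  have h2 : ∀ k ∈ Finset.univ.erase i,
      ∏ j ∈ Finset.Ioi k, (u' j - u' k)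
        = (if k < i then (y - u k) else 1) * ∏ j ∈ (Finset.Ioi k).erase i, (u j - u k) := by
    intro k hk
    have hki : k ≠ i := (Finset.mem_erase.1 hk).1
    rw [huj k hki]
    by_cases h : k < i
    · rw [if_pos h, ← Finset.mul_prod_erase (Finset.Ioi k) _ (Finset.mem_Ioi.2 h), hui]
      congr 1
      refine Finset.prod_congr rfl fun j hj => ?_
      rw [huj j (Finset.mem_erase.1 hj).1]
    · rw [if_neg h, Finset.erase_eq_of_notMem (by simp [h]), one_mul]
      refine Finset.prod_congr rfl fun j hj => ?_
      have hik : i < k := lt_of_le_of_ne (le_of_not_gt h) hki.symm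
      have : i < j := hik.trans (Finset.mem_Ioi.1 hj)
      rw [huj j (ne_of_gt this)]
  rw [Finset.prod_congr rfl h2, Finset.prod_mul_distrib]
  have h3 : ∏ k ∈ Finset.univ.erase i, (if k < i then (y - u k) else 1)
      = ∏ k ∈ Finset.Iio i, (y - u k) := by
    rw [← Finset.prod_filter]
    congr 1
    ext k
    simp only [Finset.mem_filter, Finset.mem_erase, Finset.mem_univ, true_and, Finset.mem_Iio,
      and_true]
    exact ⟨fun h => h.2, fun h => ⟨ne_of_lt h, h⟩⟩
  rw [h1, h3]
  ring

lemma rvand_update_mul {n : ℕ} (u : Fin n → ℝ) (i : Fin n) (y : ℝ) :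
    rvand (Function.update u i y) * ∏ j ∈ Finset.univ.erase i, (u j - u i)
      = rvand u * ∏ j ∈ Finset.univ.erase i, (u j - y) := by
  have hself : rvand u = rvand (Function.update u i (u i)) := by
    rw [Function.update_eq_self]
  rw [hself, rvand_update u i y, rvand_update u i (u i),
    prod_erase_split i (fun j => u j - u i), prod_erase_split i (fun j => u j - y)]
  have key : (∏ k ∈ Finset.Iio i, (y - u k)) * (∏ k ∈ Finset.Iio i, (u k - u i))
      = (∏ k ∈ Finset.Iio i, (u i - u k)) * (∏ k ∈ Finset.Iio i, (u k - y)) := by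
    rw [← Finset.prod_mul_distrib, ← Finset.prod_mul_distrib]
    exact Finset.prod_congr rfl fun k _ => by ring
  linear_combination ((∏ j ∈ Finset.Ioi i, (u j - y)) * (∏ j ∈ Finset.Ioi i, (u j - u i))
    * ∏ k ∈ Finset.univ.erase i, ∏ j ∈ (Finset.Ioi k).erase i, (u j - u k)) * key

lemma rvand_update_eq {n : ℕ} {u : Fin n → ℝ} (hinj : Function.Injective u) (i : Fin n) (y : ℝ) :
    rvand (Function.update u i y)
      = rvand u * ∏ j ∈ Finset.univ.erase i, ((u j - y) / (u j - u i)) := by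
  have hne : ∀ j ∈ Finset.univ.erase i, u j - u i ≠ 0 := fun j hj =>
    sub_ne_zero.2 fun h => (Finset.mem_erase.1 hj).1 (hinj h)
  have hP : (∏ j ∈ Finset.univ.erase i, (u j - u i)) ≠ 0 := Finset.prod_ne_zero_iff.2 hne
  apply mul_right_cancel₀ hP
  rw [rvand_update_mul, Finset.prod_div_distrib, mul_assoc, div_mul_cancel₀ _ hP]

lemma basis_coeff_top {ι : Type*} [DecidableEq ι] {s : Finset ι} {v : ι → ℝ} {i : ι}
    (hi : i ∈ s) :
    (Lagrange.basis s v i).coeff (s.card - 1) = Lagrange.nodalWeight s v i := by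
  have hb : Lagrange.basis s v i
      = Polynomial.C (Lagrange.nodalWeight s v i) * Lagrange.nodal (s.erase i) v := by
    simp_rw [Lagrange.basis, Lagrange.basisDivisor, Lagrange.nodalWeight,
      Finset.prod_mul_distrib, map_prod, Lagrange.nodal]
  have hd : (Lagrange.nodal (s.erase i) v).natDegree = s.card - 1 := by
    rw [Lagrange.natDegree_nodal, Finset.card_erase_of_mem hi]
  rw [hb, Polynomial.coeff_C_mul, ← hd, (Lagrange.nodal_monic).coeff_natDegree, mul_one]

lemma lag_coeff {ι : Type*} [DecidableEq ι] {s : Finset ι} {v : ι → ℝ}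
    (hvs : Set.InjOn v s) (f : Polynomial ℝ) (hdeg : f.degree < s.card) :
    ∑ i ∈ s, f.eval (v i) * Lagrange.nodalWeight s v i = f.coeff (s.card - 1) := by
  conv_rhs => rw [Lagrange.eq_interpolate hvs hdeg]
  rw [Lagrange.interpolate_apply, Polynomial.finset_sum_coeff]
  exact Finset.sum_congr rfl fun i hi => by
    rw [Polynomial.coeff_C_mul, basis_coeff_top hi]

lemma prod_neg_one_pow {ι : Type*} (s : Finset ι) (f : ι → ℝ) :
    ∏ j ∈ s, (-(f j)) = (-1 : ℝ) ^ s.card * ∏ j ∈ s, f j := by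
  rw [← Finset.prod_const, ← Finset.prod_mul_distrib]
  exact Finset.prod_congr rfl fun j _ => by ring

lemma wval {n : ℕ} (a b c b' c' : ℝ) {u : Fin n → ℝ} (hinj : Function.Injective u)
    {T : Finset (Fin n)} (hT : 2 ≤ T.card) :
    ∑ i ∈ T, (((-1 : ℝ)) ^ (T.erase i).card * (a * u i ^ 2 + b * u i + c)
          + (a * u i ^ 2 + b' * u i + c'))
        * ∏ j ∈ T.erase i, (u j - u i)⁻¹
      = if T.card = 2 then b - b' else if T.card = 3 then 2 * a else 0 := by
  classical
  have hne : ∀ i j : Fin n, i ≠ j → u i - u j ≠ 0 := fun i j hij =>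
    sub_ne_zero.2 fun h => hij (hinj h)
  -- rewrite to nodalWeight form
  have hstep : ∀ i ∈ T,
      (((-1 : ℝ)) ^ (T.erase i).card * (a * u i ^ 2 + b * u i + c)
          + (a * u i ^ 2 + b' * u i + c')) * ∏ j ∈ T.erase i, (u j - u i)⁻¹
      = ((a * u i ^ 2 + b * u i + c)
          + ((-1 : ℝ)) ^ (T.erase i).card * (a * u i ^ 2 + b' * u i + c'))
        * Lagrange.nodalWeight T u i := by
    intro i _
    have h1 : ∏ j ∈ T.erase i, (u j - u i)⁻¹
        = (-1 : ℝ) ^ (T.erase i).card * ∏ j ∈ T.erase i, (u i - u j)⁻¹ := by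
      rw [← prod_neg_one_pow]
      exact Finset.prod_congr rfl fun j _ => by rw [← inv_neg, neg_sub]
    rw [h1, Lagrange.nodalWeight]
    set e : ℝ := ((-1 : ℝ)) ^ (T.erase i).card with he'
    have he : e * e = 1 := by
      rw [he', ← pow_add, ← two_mul, pow_mul]; norm_num
    set W : ℝ := ∏ j ∈ T.erase i, (u i - u j)⁻¹ with hW'
    linear_combination ((a * u i ^ 2 + b * u i + c) * W) * he
  rw [Finset.sum_congr rfl hstep]
  by_cases h2 : T.card = 2
  · rw [if_pos h2]
    obtain ⟨i, j, hij, rfl⟩ := Finset.card_eq_two.1 h2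
    have e1 : ({i, j} : Finset (Fin n)).erase i = {j} := by
      rw [Finset.erase_insert (by simp [hij])]
    have e2 : ({i, j} : Finset (Fin n)).erase j = {i} := by
      rw [Finset.pair_comm, Finset.erase_insert (by simp [hij.symm])]
    rw [Finset.sum_pair hij, e1, e2, Lagrange.nodalWeight, Lagrange.nodalWeight, e1, e2,
      Finset.prod_singleton, Finset.prod_singleton, Finset.card_singleton,
      Finset.card_singleton]
    have d1 : u i - u j ≠ 0 := hne i j hij
    have d2 : u j - u i ≠ 0 := hne j i hij.symm
    field_simp
    ring
  · by_cases h3 : T.card = 3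
    · rw [if_neg h2, if_pos h3]
      obtain ⟨i, j, k, hij, hik, hjk, rfl⟩ := Finset.card_eq_three.1 h3
      have hi : i ∉ ({j, k} : Finset (Fin n)) := by simp [hij, hik]
      have e1 : ({i, j, k} : Finset (Fin n)).erase i = {j, k} := Finset.erase_insert hi
      have e2 : ({i, j, k} : Finset (Fin n)).erase j = {i, k} := by
        ext x
        simp only [Finset.mem_erase, Finset.mem_insert, Finset.mem_singleton]
        constructor
        · rintro ⟨hx, h | h | h⟩
          · exact Or.inl h
          · exact absurd h hx
          · exact Or.inr h
        · rintro (h | h)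
          · exact ⟨fun hh => hij (h.symm.trans hh), Or.inl h⟩
          · exact ⟨fun hh => hjk (hh.symm.trans h), Or.inr (Or.inr h)⟩
      have e3 : ({i, j, k} : Finset (Fin n)).erase k = {i, j} := by
        ext x
        simp only [Finset.mem_erase, Finset.mem_insert, Finset.mem_singleton]
        constructor
        · rintro ⟨hx, h | h | h⟩
          · exact Or.inl h
          · exact Or.inr h
          · exact absurd h hx
        · rintro (h | h)
          · exact ⟨fun hh => hik (h.symm.trans hh), Or.inl h⟩
          · exact ⟨fun hh => hjk (h.symm.trans hh), Or.inr (Or.inl h)⟩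
      rw [Finset.sum_insert hi, Finset.sum_pair hjk, e1, e2, e3,
        Lagrange.nodalWeight, Lagrange.nodalWeight, Lagrange.nodalWeight, e1, e2, e3,
        Finset.prod_pair hjk, Finset.prod_pair hik, Finset.prod_pair hij,
        Finset.card_pair hjk, Finset.card_pair hik, Finset.card_pair hij]
      have d1 : u i - u j ≠ 0 := hne i j hij
      have d2 : u j - u i ≠ 0 := hne j i hij.symm
      have d3 : u i - u k ≠ 0 := hne i k hik
      have d4 : u k - u i ≠ 0 := hne k i hik.symm
      have d5 : u j - u k ≠ 0 := hne j k hjk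
      have d6 : u k - u j ≠ 0 := hne k j hjk.symm
      field_simp
      ring
    · rw [if_neg h2, if_neg h3]
      have h4 : 4 ≤ T.card := by omega
      -- use Lagrange interpolation coefficient extraction
      have hcongr : ∀ i ∈ T,
          ((a * u i ^ 2 + b * u i + c)
              + ((-1 : ℝ)) ^ (T.erase i).card * (a * u i ^ 2 + b' * u i + c'))
            * Lagrange.nodalWeight T u i
          = (Polynomial.eval (u i)
              (Polynomial.C a * Polynomial.X ^ 2 + Polynomial.C b * Polynomial.X
                + Polynomial.C c
                + Polynomial.C ((-1 : ℝ) ^ (T.card - 1))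
                  * (Polynomial.C a * Polynomial.X ^ 2 + Polynomial.C b' * Polynomial.X
                    + Polynomial.C c')))
            * Lagrange.nodalWeight T u i := by
        intro i hi
        rw [Finset.card_erase_of_mem hi]
        simp only [Polynomial.eval_add, Polynomial.eval_mul, Polynomial.eval_C,
          Polynomial.eval_X, Polynomial.eval_pow]
      rw [Finset.sum_congr rfl hcongr]
      set f : Polynomial ℝ := Polynomial.C a * Polynomial.X ^ 2 + Polynomial.C b * Polynomial.X
        + Polynomial.C c
        + Polynomial.C ((-1 : ℝ) ^ (T.card - 1))
          * (Polynomial.C a * Polynomial.X ^ 2 + Polynomial.C b' * Polynomial.X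
            + Polynomial.C c') with hf
      have hdegf : f.degree ≤ 2 := by
        rw [hf]
        refine le_trans (Polynomial.degree_add_le _ _) (max_le Polynomial.degree_quadratic_le ?_)
        refine le_trans (Polynomial.degree_mul_le _ _) ?_
        refine le_trans (add_le_add Polynomial.degree_C_le Polynomial.degree_quadratic_le) ?_
        simp
      have hdeg : f.degree < (T.card : WithBot ℕ) := by
        refine lt_of_le_of_lt hdegf ?_
        exact_mod_cast Nat.lt_of_lt_of_le (by norm_num) h4
      rw [lag_coeff (Function.Injective.injOn hinj) f hdeg]
      apply Polynomial.coeff_eq_zero_of_degree_lt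
      refine lt_of_le_of_lt hdegf ?_
      exact_mod_cast Nat.lt_of_lt_of_le (by norm_num) (by omega : 3 ≤ T.card - 1)

lemma swap_powerset {α : Type*} [Fintype α] [DecidableEq α] (h : α → Finset α → ℝ) :
    ∑ i : α, ∑ S ∈ (Finset.univ.erase i).powerset, h i S
      = ∑ T ∈ (Finset.univ : Finset α).powerset, ∑ i ∈ T, h i (T.erase i) := by
  have step : ∀ i : α, ∑ S ∈ (Finset.univ.erase i).powerset, h i S
      = ∑ T ∈ Finset.univ.powerset.filter (fun T => i ∈ T), h i (T.erase i) := by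
    intro i
    refine Finset.sum_nbij' (fun S => insert i S) (fun T => T.erase i) ?_ ?_ ?_ ?_ ?_
    · intro S hS
      simp only [Finset.mem_filter, Finset.mem_powerset]
      exact ⟨Finset.subset_univ _, Finset.mem_insert_self i S⟩
    · intro T hT
      simp only [Finset.mem_powerset]
      exact Finset.erase_subset_erase i (Finset.subset_univ T)
    · intro S hS
      refine Finset.erase_insert ?_
      intro hiS
      exact absurd (Finset.mem_powerset.1 hS hiS) (by simp)
    · intro T hT
      exact Finset.insert_erase (Finset.mem_filter.1 hT).2
    · intro S hS
      congr 1
      refine (Finset.erase_insert ?_).symm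
      intro hiS
      exact absurd (Finset.mem_powerset.1 hS hiS) (by simp)
  calc ∑ i : α, ∑ S ∈ (Finset.univ.erase i).powerset, h i S
      = ∑ i : α, ∑ T ∈ Finset.univ.powerset, if i ∈ T then h i (T.erase i) else 0 := by
        refine Finset.sum_congr rfl fun i _ => ?_
        rw [step i, Finset.sum_filter]
    _ = ∑ T ∈ Finset.univ.powerset, ∑ i : α, if i ∈ T then h i (T.erase i) else 0 :=
        Finset.sum_comm
    _ = ∑ T ∈ (Finset.univ : Finset α).powerset, ∑ i ∈ T, h i (T.erase i) := by
        refine Finset.sum_congr rfl fun T _ => ?_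
        rw [← Finset.sum_filter]
        congr 1
        ext x
        simp

lemma cast_choose_three (n : ℕ) : (n.choose 3 : ℝ) = n * (n - 1) * (n - 2) / 6 := by
  induction n with
  | zero => norm_num
  | succ m ih =>
    rw [show m + 1 = m.succ from rfl, Nat.choose_succ_succ]
    push_cast
    rw [Nat.cast_choose_two, ih]
    ring

theorem keyid (n : ℕ) (a b c b' c' : ℝ) (u : Fin n → ℝ) (hinj : Function.Injective u) :
    ∑ i : Fin n,
      ((a * u i ^ 2 + b * u i + c)
          * ((∏ j ∈ Finset.univ.erase i, ((u j - (u i + 1)) / (u j - u i))) - 1)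
        + (a * u i ^ 2 + b' * u i + c')
          * ((∏ j ∈ Finset.univ.erase i, ((u j - (u i - 1)) / (u j - u i))) - 1))
      = a * n * (n - 1) * (n - 2) / 3 + (b - b') * n * (n - 1) / 2 := by
  classical
  set p : Fin n → ℝ := fun i => a * u i ^ 2 + b * u i + c with hp
  set q : Fin n → ℝ := fun i => a * u i ^ 2 + b' * u i + c' with hq
  set h : Fin n → Finset (Fin n) → ℝ := fun i S =>
    ((-1 : ℝ) ^ S.card * p i + q i) * ∏ j ∈ S, (u j - u i)⁻¹ with hh
  -- product expansion
  have hprod : ∀ (i : Fin n) (ε : ℝ),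
      ∏ j ∈ Finset.univ.erase i, ((u j - (u i + ε)) / (u j - u i))
        = ∑ S ∈ (Finset.univ.erase i).powerset, (-ε) ^ S.card * ∏ j ∈ S, (u j - u i)⁻¹ := by
    intro i ε
    have hterm : ∀ j ∈ Finset.univ.erase i,
        (u j - (u i + ε)) / (u j - u i) = (-ε) * (u j - u i)⁻¹ + 1 := by
      intro j hj
      have hne : u j - u i ≠ 0 := sub_ne_zero.2 fun hh => (Finset.mem_erase.1 hj).1 (hinj hh)
      field_simp
      ring
    rw [Finset.prod_congr rfl hterm, Finset.prod_add]
    refine Finset.sum_congr rfl fun S hS => ?_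
    rw [Finset.prod_const_one, mul_one, Finset.prod_mul_distrib, Finset.prod_const]
  -- rewrite each summand
  have hsummand : ∀ i : Fin n,
      (p i * ((∏ j ∈ Finset.univ.erase i, ((u j - (u i + 1)) / (u j - u i))) - 1)
        + q i * ((∏ j ∈ Finset.univ.erase i, ((u j - (u i - 1)) / (u j - u i))) - 1))
      = (∑ S ∈ (Finset.univ.erase i).powerset, h i S) - (p i + q i) := by
    intro i
    have h1 := hprod i 1
    have h2' : ∏ j ∈ Finset.univ.erase i, ((u j - (u i - 1)) / (u j - u i))
        = ∑ S ∈ (Finset.univ.erase i).powerset, (1 : ℝ) ^ S.card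
            * ∏ j ∈ S, (u j - u i)⁻¹ := by
      have := hprod i (-1)
      simpa [sub_eq_add_neg] using this
    rw [h1, h2', hh]
    have e1 : p i * ((∑ S ∈ (Finset.univ.erase i).powerset,
            (-1 : ℝ) ^ S.card * ∏ j ∈ S, (u j - u i)⁻¹) - 1)
        + q i * ((∑ S ∈ (Finset.univ.erase i).powerset,
            (1 : ℝ) ^ S.card * ∏ j ∈ S, (u j - u i)⁻¹) - 1)
      = (∑ S ∈ (Finset.univ.erase i).powerset,
          (p i * ((-1 : ℝ) ^ S.card * ∏ j ∈ S, (u j - u i)⁻¹)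
            + q i * ((1 : ℝ) ^ S.card * ∏ j ∈ S, (u j - u i)⁻¹))) - (p i + q i) := by
      rw [Finset.sum_add_distrib, ← Finset.mul_sum, ← Finset.mul_sum]; ring
    rw [e1]
    congr 1
    refine Finset.sum_congr rfl fun S _ => ?_
    rw [one_pow]; ring
  rw [Finset.sum_congr rfl (fun i _ => hsummand i), Finset.sum_sub_distrib, swap_powerset]
  rw [Finset.sum_powerset]
  have hcard : (Finset.univ : Finset (Fin n)).card = n := by simp
  set P : ℝ := ∑ i : Fin n, (p i + q i) with hP
  have hV : ∀ k ∈ Finset.range ((Finset.univ : Finset (Fin n)).card + 1),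
      (∑ T ∈ Finset.powersetCard k (Finset.univ : Finset (Fin n)), ∑ i ∈ T, h i (T.erase i))
      = (if k = 1 then P else 0)
        + (n.choose k : ℝ) * (if k = 2 then b - b' else if k = 3 then 2 * a else 0) := by
    intro k _
    by_cases hk1 : k = 1
    · subst hk1
      rw [Finset.powersetCard_one, Finset.sum_map]
      simp only [Function.Embedding.coeFn_mk]
      rw [if_pos trivial]
      have hsing : ∀ i : Fin n,
          (∑ j ∈ ({i} : Finset (Fin n)), h j (({i} : Finset (Fin n)).erase j)) = p i + q i := by
        intro i
        rw [Finset.sum_singleton, Finset.erase_singleton, hh]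
        simp
      rw [Finset.sum_congr rfl (fun i _ => hsing i)]
      simp [hP]
    · by_cases hk0 : k = 0
      · subst hk0
        rw [Finset.powersetCard_zero]
        simp
      · have hk2 : 2 ≤ k := by omega
        rw [if_neg hk1, zero_add]
        have hconst : ∀ T ∈ Finset.powersetCard k (Finset.univ : Finset (Fin n)),
            (∑ i ∈ T, h i (T.erase i))
            = (if k = 2 then b - b' else if k = 3 then 2 * a else 0) := by
          intro T hT
          obtain ⟨-, hTcard⟩ := Finset.mem_powersetCard.1 hT
          have hw := wval a b c b' c' hinj (T := T) (by omega)
          rw [hTcard] at hw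
          rw [hh]
          exact hw
        rw [Finset.sum_congr rfl hconst, Finset.sum_const, Finset.card_powersetCard, hcard,
          nsmul_eq_mul]
  rw [Finset.sum_congr rfl hV, Finset.sum_add_distrib, Finset.sum_ite_eq']
  have h1mem : (if (1 : ℕ) ∈ Finset.range ((Finset.univ : Finset (Fin n)).card + 1)
      then P else 0) = P := by
    cases n with
    | zero =>
      rw [if_neg (by simp [hcard])]
      rw [hP]
      simp
    | succ m => rw [if_pos (by simp [hcard])]
  rw [h1mem, hcard]
  have hsub : ∑ k ∈ Finset.range (n + 1),
        (n.choose k : ℝ) * (if k = 2 then b - b' else if k = 3 then 2 * a else 0)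
      = ∑ k ∈ Finset.range (n + 4),
        (n.choose k : ℝ) * (if k = 2 then b - b' else if k = 3 then 2 * a else 0) := by
    refine Finset.sum_subset (by intro x hx; simp only [Finset.mem_range] at hx ⊢; omega) ?_
    intro x hx hnx
    simp only [Finset.mem_range] at hx hnx
    rw [Nat.choose_eq_zero_of_lt (by omega)]
    simp
  rw [hsub]
  have h23 : ∑ k ∈ Finset.range (n + 4),
        (n.choose k : ℝ) * (if k = 2 then b - b' else if k = 3 then 2 * a else 0)
      = ∑ k ∈ ({2, 3} : Finset ℕ),
        (n.choose k : ℝ) * (if k = 2 then b - b' else if k = 3 then 2 * a else 0) := by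
    refine (Finset.sum_subset ?_ ?_).symm
    · intro x hx
      simp only [Finset.mem_insert, Finset.mem_singleton] at hx
      simp only [Finset.mem_range]
      omega
    · intro x _ hnx
      simp only [Finset.mem_insert, Finset.mem_singleton] at hnx
      push_neg at hnx
      rw [if_neg hnx.1, if_neg hnx.2, mul_zero]
  rw [h23, Finset.sum_pair (by norm_num : (2 : ℕ) ≠ 3)]
  norm_num
  rw [Nat.cast_choose_two, cast_choose_three]
  ring


/-- The Vandermonde determinant `Δₙ(x) = ∏_{i<j} (xⱼ - xᵢ)` for integer points,
as a real number. -/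
noncomputable def vand (n : ℕ) (x : Fin n → ℤ) : ℝ :=
  ∏ i : Fin n, ∏ j ∈ Finset.Ioi i, ((x j : ℝ) - (x i : ℝ))

/-- The Vandermonde function is an eigenfunction of the sum of one-dimensional quadratic-rate
difference operators: `∑ᵢ L_{xᵢ} Δₙ = (a n(n-1)(n-2)/3 + (b - b̄) n(n-1)/2) Δₙ`. -/
theorem stmt6 (n : ℕ) (a b c b' c' : ℝ) (x : Fin n → ℤ) (hx : StrictMono x) :
    ∑ i : Fin n,
      ((a * (x i : ℝ) ^ 2 + b * (x i : ℝ) + c) *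
          (vand n (Function.update x i (x i + 1)) - vand n x)
        + (a * (x i : ℝ) ^ 2 + b' * (x i : ℝ) + c') *
          (vand n (Function.update x i (x i - 1)) - vand n x))
      = (a * (n : ℝ) * ((n : ℝ) - 1) * ((n : ℝ) - 2) / 3
          + (b - b') * (n : ℝ) * ((n : ℝ) - 1) / 2) * vand n x := by
  classical
  set u : Fin n → ℝ := fun i => (x i : ℝ) with hu
  have hinj : Function.Injective u := by
    intro i j hij
    have hcast : (x i : ℝ) = (x j : ℝ) := hij
    exact hx.injective (by exact_mod_cast hcast)
  have hvand : vand n x = rvand u := rfl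
  have hupd : ∀ (i : Fin n) (z : ℤ),
      vand n (Function.update x i z) = rvand (Function.update u i (z : ℝ)) := by
    intro i z
    have : ∀ j, ((Function.update x i z j : ℤ) : ℝ) = Function.update u i (z : ℝ) j := by
      intro j
      by_cases hj : j = i
      · subst hj; simp
      · rw [Function.update_of_ne hj, Function.update_of_ne hj, hu]
    rw [vand, rvand]
    exact Finset.prod_congr rfl fun i _ => Finset.prod_congr rfl fun j _ => by rw [this, this]
  have step : ∀ i : Fin n,
      (a * (x i : ℝ) ^ 2 + b * (x i : ℝ) + c) *
          (vand n (Function.update x i (x i + 1)) - vand n x)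
        + (a * (x i : ℝ) ^ 2 + b' * (x i : ℝ) + c') *
          (vand n (Function.update x i (x i - 1)) - vand n x)
      = ((a * u i ^ 2 + b * u i + c)
          * ((∏ j ∈ Finset.univ.erase i, ((u j - (u i + 1)) / (u j - u i))) - 1)
        + (a * u i ^ 2 + b' * u i + c')
          * ((∏ j ∈ Finset.univ.erase i, ((u j - (u i - 1)) / (u j - u i))) - 1))
        * rvand u := by
    intro i
    have e1 : vand n (Function.update x i (x i + 1))
        = rvand (Function.update u i (u i + 1)) := by
      rw [hupd i (x i + 1)]
      congr 1
      push_cast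
      rw [hu]
    have e2 : vand n (Function.update x i (x i - 1))
        = rvand (Function.update u i (u i - 1)) := by
      rw [hupd i (x i - 1)]
      congr 1
      push_cast
      rw [hu]
    rw [e1, e2, rvand_update_eq hinj i (u i + 1), rvand_update_eq hinj i (u i - 1), hvand]
    have hxu : (x i : ℝ) = u i := rfl
    rw [hxu]
    ring
  rw [Finset.sum_congr rfl fun i _ => step i, ← Finset.sum_mul, keyid n a b c b' c' u hinj,
    hvand]
end

section
/- Let Q_{ν_i} be polynomials with Q_k(0) = 1 for all k, and let ν_1 < ν_2 < ... < ν_{n+1} be nonnegative integers. Then the multivariate polynomial det(Q_{ν_i}(x_j))_{i,j=1}^{n+1} / det(x_j^{i-1})_{i,j=1}^{n+1}, evaluated at x_1 = 0 (as the limit/polynomial evaluation), equals det((Q_{ν_{i+1}}(x_{j+1}) - Q_{ν_i}(x_{j+1}))/x_{j+1})_{i,j=1}^{n} / det(x_{j+1}^{i-1})_{i,j=1}^{n}. -/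
private lemma expand_col0 {n : ℕ} (M : Matrix (Fin (n + 1)) (Fin (n + 1)) ℝ)
    (h : ∀ i, M i 0 = if i = 0 then 1 else 0) :
    M.det = Matrix.det (Matrix.of fun i j : Fin n => M i.succ j.succ) := by
  rw [Matrix.det_succ_column_zero]
  rw [Finset.sum_eq_single 0]
  · simp [h]
    congr 1
  · intro i _ hi
    simp [h, hi]
  · simp

/-- Evaluating the Karlin–McGregor polynomial ratio at `x₁ = 0` (using `Qₖ(0) = 1`):
`det(Q_{νᵢ}(xⱼ))/det(xⱼ^{i-1})` over `n+1` variables with `x₁ = 0` equals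
`det((Q_{ν_{i+1}}(x_{j+1}) - Q_{νᵢ}(x_{j+1}))/x_{j+1}) / det(x_{j+1}^{i-1})` over `n`
variables. -/
theorem stmt14 (n : ℕ) (Q : ℕ → Polynomial ℝ) (hQ : ∀ k, (Q k).eval 0 = 1)
    (ν : Fin (n + 1) → ℕ) (hν : StrictMono ν)
    (x : Fin (n + 1) → ℝ) (hx0 : x 0 = 0) (hinj : Function.Injective x) :
    Matrix.det (Matrix.of fun i j : Fin (n + 1) => (Q (ν i)).eval (x j)) /
        Matrix.det (Matrix.of fun i j : Fin (n + 1) => x j ^ (i : ℕ))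
      = Matrix.det (Matrix.of fun i j : Fin n =>
            ((Q (ν i.succ)).eval (x j.succ) - (Q (ν i.castSucc)).eval (x j.succ)) / x j.succ) /
        Matrix.det (Matrix.of fun i j : Fin n => x j.succ ^ (i : ℕ)) := by
  have hxne : ∀ j : Fin n, x j.succ ≠ 0 := by
    intro j hj
    exact Fin.succ_ne_zero j (hinj (hj.trans hx0.symm))
  -- B: row-reduced numerator matrix
  set B : Matrix (Fin (n + 1)) (Fin (n + 1)) ℝ :=
    Matrix.of (Fin.cons (fun j => (Q (ν 0)).eval (x j))
      (fun i j => (Q (ν i.succ)).eval (x j) - (Q (ν i.castSucc)).eval (x j))) with hB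
  have hnum : Matrix.det (Matrix.of fun i j : Fin (n + 1) => (Q (ν i)).eval (x j)) = B.det := by
    apply Matrix.det_eq_of_forall_row_eq_smul_add_pred (fun _ => 1)
    · intro j; simp [hB]
    · intro i j; simp [hB]
  have hcol : ∀ i, B i 0 = if i = 0 then 1 else 0 := by
    intro i
    refine Fin.cases ?_ ?_ i
    · simp [hB, hx0, hQ]
    · intro i'
      simp [hB, hx0, hQ, Fin.succ_ne_zero]
  have hBdet : B.det = Matrix.det (Matrix.of fun i j : Fin n =>
      (Q (ν i.succ)).eval (x j.succ) - (Q (ν i.castSucc)).eval (x j.succ)) := by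
    rw [expand_col0 B hcol]
    congr 1
  -- Denominator
  have hVcol : ∀ i : Fin (n+1), (Matrix.of fun i j : Fin (n + 1) => x j ^ (i : ℕ)) i 0
      = if i = 0 then 1 else 0 := by
    intro i
    by_cases hi : i = 0
    · simp [hi, hx0]
    · have : (i : ℕ) ≠ 0 := fun h => hi (Fin.ext (by simp [h]))
      simp [hi, hx0, zero_pow this]
  have hVdet : Matrix.det (Matrix.of fun i j : Fin (n + 1) => x j ^ (i : ℕ))
      = (∏ j : Fin n, x j.succ) *
        Matrix.det (Matrix.of fun i j : Fin n => x j.succ ^ (i : ℕ)) := by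
    rw [expand_col0 _ hVcol]
    rw [show (Matrix.of fun i j : Fin n =>
        (Matrix.of fun i j : Fin (n + 1) => x j ^ (i : ℕ)) i.succ j.succ)
      = Matrix.of fun i j : Fin n => x j.succ * x j.succ ^ (i : ℕ) by
        ext i j; simp [pow_succ, mul_comm]]
    exact Matrix.det_mul_row _ _
  -- RHS numerator
  have hRnum : Matrix.det (Matrix.of fun i j : Fin n =>
        ((Q (ν i.succ)).eval (x j.succ) - (Q (ν i.castSucc)).eval (x j.succ)) / x j.succ)
      = (∏ j : Fin n, (x j.succ)⁻¹) * Matrix.det (Matrix.of fun i j : Fin n =>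
        (Q (ν i.succ)).eval (x j.succ) - (Q (ν i.castSucc)).eval (x j.succ)) := by
    rw [show (Matrix.of fun i j : Fin n =>
        ((Q (ν i.succ)).eval (x j.succ) - (Q (ν i.castSucc)).eval (x j.succ)) / x j.succ)
      = Matrix.of fun i j : Fin n => (x j.succ)⁻¹ *
        ((Q (ν i.succ)).eval (x j.succ) - (Q (ν i.castSucc)).eval (x j.succ)) by
        ext i j; simp [div_eq_inv_mul]]
    exact Matrix.det_mul_row _ _
  rw [hnum, hBdet, hVdet, hRnum]
  have hP : (∏ j : Fin n, x j.succ) ≠ 0 := Finset.prod_ne_zero_iff.mpr fun j _ => hxne j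
  rw [Finset.prod_inv_distrib]
  field_simp
end

section
/- Let Q̂_{ν_i} and Q_k be polynomial families related by Q̂_m(x) = ∑_{k=0}^m π(k)·Q_k(x) for positive weights π(k). Then for ν_1 < ... < ν_n, det(Q̂_{ν_i}(x_j))_{i,j=1}^n = ∑_{k} (∏_{i=1}^n π(k_i)) · det(Q_{k_i}(x_j))_{i,j=1}^n, where the sum is over all integer tuples k = (k_1,...,k_n) with ν_0+1 := 0 ≤ k_1 ≤ ν_1 < k_2 ≤ ν_2 < ... < k_n ≤ ν_n (i.e., k interlaces with ν in the sense ν_{i-1} < k_i ≤ ν_i). -/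
/-- Branching rule for multivariate Karlin–McGregor polynomials:
`det(Q̂_{νᵢ}(xⱼ)) = ∑_{k interlacing ν} (∏ᵢ π(kᵢ)) det(Q_{kᵢ}(xⱼ))`, where the sum is over
tuples `k` with `ν_{i-1} < kᵢ ≤ νᵢ` (and `k₁ ≥ 0`). -/
theorem stmt15 (n : ℕ) (Q Qhat : ℕ → Polynomial ℝ) (pi' : ℕ → ℝ) (hpi : ∀ k, 0 < pi' k)
    (hrel : ∀ m, Qhat m = ∑ k ∈ Finset.range (m + 1), Polynomial.C (pi' k) * Q k)
    (ν : Fin n → ℕ) (hν : StrictMono ν) (x : Fin n → ℝ) :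
    Matrix.det (Matrix.of fun i j : Fin n => (Qhat (ν i)).eval (x j))
      = ∑ k ∈ (Fintype.piFinset fun i : Fin n => Finset.range (ν i + 1)).filter
          (fun k => ∀ i j : Fin n, (i : ℕ) + 1 = (j : ℕ) → ν i < k j),
          (∏ i, pi' (k i)) * Matrix.det (Matrix.of fun i j : Fin n => (Q (k i)).eval (x j)) := by
  classical
  -- lower bound of the interval for coordinate `i`
  set lb : Fin n → ℕ := fun i =>
    if h : (i : ℕ) = 0 then 0 else ν ⟨(i : ℕ) - 1, by omega⟩ + 1 with hlb
  set s : Fin n → Finset ℕ := fun i => Finset.Ico (lb i) (ν i + 1) with hs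
  -- the index set equals a product of intervals
  have hidx : (Fintype.piFinset fun i : Fin n => Finset.range (ν i + 1)).filter
          (fun k => ∀ i j : Fin n, (i : ℕ) + 1 = (j : ℕ) → ν i < k j)
      = Fintype.piFinset s := by
    ext k
    simp only [Finset.mem_filter, Fintype.mem_piFinset, Finset.mem_range, Finset.mem_Ico, hs]
    constructor
    · rintro ⟨h1, h2⟩ i
      refine ⟨?_, h1 i⟩
      by_cases hi : (i : ℕ) = 0
      · simp [hlb, hi]
      · have hlbi : lb i = ν ⟨(i : ℕ) - 1, by omega⟩ + 1 := by simp [hlb, hi]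
        rw [hlbi]
        exact h2 ⟨(i : ℕ) - 1, by omega⟩ i (by simp; omega)
    · intro h
      refine ⟨fun i => (h i).2, fun i j hij => ?_⟩
      have hj : (j : ℕ) ≠ 0 := by omega
      have hlbj : lb j = ν ⟨(j : ℕ) - 1, by omega⟩ + 1 := by simp [hlb, hj]
      have hpred : (⟨(j : ℕ) - 1, by omega⟩ : Fin n) = i := by
        apply Fin.ext; simp; omega
      have h1 := (h j).1
      rw [hlbj, hpred] at h1
      omega
  -- disjointness of the intervals
  have hdisj : ∀ a b : Fin n, a < b → Disjoint (s a) (s b) := by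
    intro a b hab
    rw [Finset.disjoint_left]
    intro m hma hmb
    simp only [hs, Finset.mem_Ico] at hma hmb
    have hb : (b : ℕ) ≠ 0 := by
      have := hab
      omega
    have hlbb : lb b = ν ⟨(b : ℕ) - 1, by omega⟩ + 1 := by simp [hlb, hb]
    have hle : ν a ≤ ν ⟨(b : ℕ) - 1, by omega⟩ := by
      apply hν.monotone
      have : (a : ℕ) ≤ (b : ℕ) - 1 := by omega
      exact this
    omega
  -- the intervals partition the range
  have hpart : ∀ i : Fin n,
      (Finset.Iic i).biUnion (fun i' => s i') = Finset.range (ν i + 1) := by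
    intro i
    ext m
    simp only [Finset.mem_biUnion, Finset.mem_Iic, Finset.mem_range, hs, Finset.mem_Ico]
    constructor
    · rintro ⟨i', hi', _, h2⟩
      have := hν.monotone hi'
      omega
    · intro hm
      set T : Finset (Fin n) := (Finset.Iic i).filter (fun i' => m ≤ ν i') with hT
      have hne : T.Nonempty := ⟨i, by simp [hT]; omega⟩
      set i₀ := T.min' hne with hi₀
      have h₀ : i₀ ∈ T := T.min'_mem hne
      simp only [hT, Finset.mem_filter, Finset.mem_Iic] at h₀
      refine ⟨i₀, h₀.1, ?_, by omega⟩
      by_cases h0 : (i₀ : ℕ) = 0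
      · simp [hlb, h0]
      · have hlbi : lb i₀ = ν ⟨(i₀ : ℕ) - 1, by omega⟩ + 1 := by simp [hlb, h0]
        rw [hlbi]
        by_contra hcon
        push_neg at hcon
        have hlt : m ≤ ν ⟨(i₀ : ℕ) - 1, by omega⟩ := by omega
        have hmem : (⟨(i₀ : ℕ) - 1, by omega⟩ : Fin n) ∈ T := by
          simp only [hT, Finset.mem_filter, Finset.mem_Iic]
          refine ⟨le_trans ?_ h₀.1, hlt⟩
          exact Fin.le_def.mpr (by simp only [Fin.val_mk]; omega)
        have h2 : i₀ ≤ (⟨(i₀ : ℕ) - 1, by omega⟩ : Fin n) := T.min'_le _ hmem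
        have h3 := Fin.le_def.mp h2
        simp only [] at h3
        omega
  -- the two matrices
  set B : Matrix (Fin n) (Fin n) ℝ :=
    Matrix.of (fun i j => ∑ m ∈ s i, pi' m * (Q m).eval (x j)) with hB
  set L : Matrix (Fin n) (Fin n) ℝ :=
    Matrix.of (fun i i' => if i' ≤ i then (1 : ℝ) else 0) with hL
  have hA : Matrix.of (fun i j : Fin n => (Qhat (ν i)).eval (x j)) = L * B := by
    ext i j
    simp only [Matrix.mul_apply, hL, hB, Matrix.of_apply, ite_mul, one_mul, zero_mul]
    rw [Finset.sum_ite, Finset.sum_const_zero, add_zero]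
    have hfil : Finset.univ.filter (fun i' => i' ≤ i) = Finset.Iic i := by
      ext; simp
    rw [hfil, ← Finset.sum_biUnion, hpart i]
    · rw [hrel]
      simp [Polynomial.eval_finset_sum]
    · intro a _ b _ hab
      rcases lt_or_gt_of_ne hab with h | h
      · exact hdisj a b h
      · exact (hdisj b a h).symm
  have hLdet : L.det = 1 := by
    rw [Matrix.det_of_lowerTriangular L]
    · simp [hL]
    · intro i j hij
      simp only [hL, Matrix.of_apply, ite_eq_right_iff]
      intro hle
      exact absurd (lt_of_lt_of_le hij hle) (lt_irrefl _)
  have hBdet : B.det = ∑ k ∈ Fintype.piFinset s,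
      (∏ i, pi' (k i)) * Matrix.det (Matrix.of fun i j => (Q (k i)).eval (x j)) := by
    have key := (Matrix.detRowAlternating (R := ℝ) (n := Fin n)).toMultilinearMap.map_sum_finset
      (fun _ m => pi' m • (fun j => (Q m).eval (x j))) s
    have hrow : (fun i : Fin n => ∑ m ∈ s i,
        (fun (_ : Fin n) m => pi' m • (fun j => (Q m).eval (x j))) i m) = B := by
      funext i j
      simp [hB, Finset.sum_apply, smul_eq_mul]
    rw [hrow] at key
    have : B.det = Matrix.detRowAlternating B := rfl
    rw [this]
    rw [show (Matrix.detRowAlternating (R := ℝ) (n := Fin n)).toMultilinearMap B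
        = Matrix.detRowAlternating B from rfl] at key
    rw [key]
    refine Finset.sum_congr rfl fun k _ => ?_
    have := (Matrix.detRowAlternating (R := ℝ) (n := Fin n)).toMultilinearMap.map_smul_univ
      (fun i => pi' (k i)) (fun i j => (Q (k i)).eval (x j))
    simp [smul_eq_mul] at this ⊢
    exact this
  rw [hA, Matrix.det_mul, hLdet, one_mul, hBdet, hidx]
end
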